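/- Let n ≥ 1. For s ∈ F₂ⁿ, let P_s be the permutation matrix on ℂ^{F₂ⁿ} given by (P_s)_{x,y} = [y = x + s], and define the coset state ρ_s := 2^{−n}(I + P_s). Then for every nonzero s, ρ_s is a positive semidefinite matrix with trace 1, and for all nonzero s, s' ∈ F₂ⁿ: tr(ρ_s ρ_{s'}) = 2^{−n} if s ≠ s', while tr(ρ_s ρ_s) = 2^{1−n}. Equivalently, with σ = 2^{−n} I and ρ̂_s := ρ_s σ^{−1} − I, one has tr(ρ̂_s ρ̂_{s'} σ) = [s = s'] for all nonzero s, s'. -/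

import Mathlib

open Matrix
open scoped ComplexOrder

/-- The permutation matrix of translation by `s` on `F₂ⁿ`: `(P_s)_{x,y} = [y = x + s]`. -/
def translationMatrix (n : ℕ) (s : Fin n → ZMod 2) :
    Matrix (Fin n → ZMod 2) (Fin n → ZMod 2) ℂ :=
  Matrix.of fun x y => if y = x + s then 1 else 0

/-- The coset state `ρ_s = 2^{-n}(I + P_s)` of the hidden subgroup `{0, s} ≤ ℤ₂ⁿ`. -/
noncomputable def cosetState (n : ℕ) (s : Fin n → ZMod 2) :
    Matrix (Fin n → ZMod 2) (Fin n → ZMod 2) ℂ :=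
  ((2 : ℂ) ^ n)⁻¹ • (1 + translationMatrix n s)

lemma trans_mul (n : ℕ) (s s' : Fin n → ZMod 2) :
    translationMatrix n s * translationMatrix n s' = translationMatrix n (s + s') := by
  ext x y
  simp only [translationMatrix, Matrix.mul_apply, Matrix.of_apply]
  rw [Finset.sum_eq_single (x + s)]
  · simp [if_pos rfl, eq_comm, add_assoc]
  · intro b _ hb; simp [hb, Ne.symm hb]
  · simp

lemma trans_tr (n : ℕ) (s : Fin n → ZMod 2) :
    (translationMatrix n s).trace = if s = 0 then (2:ℂ)^n else 0 := by
  simp only [Matrix.trace, Matrix.diag, translationMatrix, Matrix.of_apply]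
  have h : ∀ x : Fin n → ZMod 2, (x = x + s) ↔ s = 0 := by
    intro x; constructor
    · intro h; have := congrArg (· - x) h; simpa using this.symm
    · intro h; simp [h]
  simp only [h]
  split
  · simp [Finset.card_univ]
  · simp

lemma trans_herm (n : ℕ) (s : Fin n → ZMod 2) :
    (translationMatrix n s).conjTranspose = translationMatrix n s := by
  ext x y
  simp only [Matrix.conjTranspose_apply, translationMatrix, Matrix.of_apply]
  have : (x = y + s) ↔ (y = x + s) := by
    constructor <;> intro h <;> · rw [h]; ext i; simp [add_assoc, CharTwo.add_self_eq_zero]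
  simp only [this]; split <;> simp

example (n : ℕ) (hn : 1 ≤ n) : True := trivial

lemma trans_zero (n : ℕ) : translationMatrix n 0 = 1 := by
  ext x y
  simp [translationMatrix, Matrix.one_apply, eq_comm]

lemma addTwo_eq_zero (n : ℕ) (s s' : Fin n → ZMod 2) : s + s' = 0 ↔ s = s' := by
  have h : s + s' = s - s' := by
    funext i; simp [sub_eq_add_neg, CharTwo.neg_eq]
  rw [h, sub_eq_zero]

lemma card_eq (n : ℕ) : ((Fintype.card (Fin n → ZMod 2)) : ℂ) = 2 ^ n := by simp

/-- Average-correlation computation for Simon coset states: for nonzero `s`, `ρ_s` is a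
density matrix, `tr(ρ_s ρ_{s'})` equals `2^{1-n}` if `s = s'` and `2^{-n}` otherwise;
equivalently, with `σ = 2^{-n} I` and `ρ̂_s = ρ_s σ⁻¹ - I = 2ⁿ ρ_s - I`, one has
`tr(ρ̂_s ρ̂_{s'} σ) = [s = s']`. -/
theorem cosetState_correlation (n : ℕ) (hn : 1 ≤ n) :
    (∀ s : Fin n → ZMod 2, s ≠ 0 →
      (cosetState n s).PosSemidef ∧ (cosetState n s).trace = 1) ∧
    (∀ s s' : Fin n → ZMod 2, s ≠ 0 → s' ≠ 0 →
      (cosetState n s * cosetState n s').trace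
        = if s = s' then 2 / (2 : ℂ) ^ n else 1 / (2 : ℂ) ^ n) ∧
    (∀ s s' : Fin n → ZMod 2, s ≠ 0 → s' ≠ 0 →
      ((((2 : ℂ) ^ n) • cosetState n s - 1) * (((2 : ℂ) ^ n) • cosetState n s' - 1)
          * (((2 : ℂ) ^ n)⁻¹ • (1 : Matrix (Fin n → ZMod 2) (Fin n → ZMod 2) ℂ))).trace
        = if s = s' then 1 else 0) := by
  have hc : ((2:ℂ) ^ n) ≠ 0 := by positivity
  have hsmul : ∀ s : Fin n → ZMod 2,
      ((2:ℂ)^n) • cosetState n s - 1 = translationMatrix n s := by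
    intro s
    rw [cosetState, smul_smul, mul_inv_cancel₀ hc, one_smul]
    abel
  refine ⟨?_, ?_, ?_⟩
  · intro s hs
    constructor
    · have hM : (1 + translationMatrix n s) * (1 + translationMatrix n s).conjTranspose
          = (2:ℂ) • (1 + translationMatrix n s) := by
        rw [conjTranspose_add, conjTranspose_one, trans_herm, add_mul, mul_add, mul_add,
          trans_mul, (addTwo_eq_zero n s s).2 rfl, trans_zero]
        simp only [one_mul, mul_one]
        rw [two_smul]
        abel
      set r : ℝ := Real.sqrt (((2:ℝ)^n)⁻¹ / 2) with hr
      have hrr : (r:ℂ) * (r:ℂ) = ((((2:ℝ)^n)⁻¹/2 : ℝ) : ℂ) := by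
        rw [← Complex.ofReal_mul, Real.mul_self_sqrt (by positivity)]
      have h1 : cosetState n s
          = ((r:ℂ) • (1 + translationMatrix n s))
            * ((r:ℂ) • (1 + translationMatrix n s)).conjTranspose := by
        rw [Matrix.conjTranspose_smul, Complex.star_def, Complex.conj_ofReal,
          smul_mul_smul_comm, hM, smul_smul, cosetState]
        congr 1
        rw [hrr]
        push_cast
        field_simp
      rw [h1]
      exact Matrix.posSemidef_self_mul_conjTranspose _
    · rw [cosetState, trace_smul, trace_add, trace_one, trans_tr, if_neg hs, card_eq]
      simp [hc]
  · intro s s' hs hs'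
    rw [cosetState, cosetState, smul_mul_smul_comm, add_mul, mul_add, mul_add, trans_mul,
      one_mul, mul_one, trace_smul]
    simp only [one_mul, mul_one]
    rw [trace_add, trace_add, trace_add, trace_one, trans_tr, trans_tr, trans_tr,
      if_neg hs, if_neg hs', card_eq]
    by_cases h : s = s'
    · rw [if_pos ((addTwo_eq_zero n s s').2 h), if_pos h]
      rw [smul_eq_mul]
      field_simp
      ring
    · rw [if_neg (fun hz => h ((addTwo_eq_zero n s s').1 hz)), if_neg h]
      rw [smul_eq_mul]
      field_simp
      ring
  · intro s s' hs hs'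
    rw [hsmul, hsmul, trans_mul, mul_smul_comm, mul_one, trace_smul, trans_tr]
    by_cases h : s = s'
    · rw [if_pos ((addTwo_eq_zero n s s').2 h), if_pos h, smul_eq_mul,
        inv_mul_cancel₀ hc]
    · rw [if_neg (fun hz => h ((addTwo_eq_zero n s s').1 hz)), if_neg h, smul_zero]
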